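/- Let K(Γ) be the fraction field of K[λ,μ]/(f_s), f_s = μ² - R(λ) ∈ C[λ,μ] irreducible in K[λ,μ], with derivation ∂̃ induced from the coefficientwise derivation on K[λ,μ]. Then the field of constants of (K(Γ), ∂̃) is exactly C(Γ), the fraction field of C[λ,μ]/(f_s). -/

import Mathlib

open Polynomial

/-- Coefficientwise extension of a map `d : K → K` to `K[λ]`. -/
noncomputable def derivPoly {K : Type*} [Field K] (d : K → K) (q : Polynomial K) :
    Polynomial K :=
  ∑ n ∈ q.support, Polynomial.C (d (q.coeff n)) * Polynomial.X ^ n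

/-- Coefficientwise extension of `d` to `K[λ,μ] = (K[λ])[μ]`. -/
noncomputable def derivPoly2 {K : Type*} [Field K] (d : K → K)
    (p : Polynomial (Polynomial K)) : Polynomial (Polynomial K) :=
  ∑ n ∈ p.support, Polynomial.C (derivPoly d (p.coeff n)) * Polynomial.X ^ n

section aux
variable {K : Type*} [Field K] (d : K → K)

lemma derivPoly_coeff (hd0 : d 0 = 0) (q : Polynomial K) (n : ℕ) :
    (derivPoly d q).coeff n = d (q.coeff n) := by
  unfold derivPoly
  rw [Polynomial.finset_sum_coeff]
  simp only [Polynomial.coeff_C_mul, Polynomial.coeff_X_pow, mul_ite, mul_one, mul_zero]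
  rw [Finset.sum_ite_eq q.support n (fun m => d (q.coeff m))]
  split
  · rfl
  · next h => rw [Polynomial.notMem_support_iff.mp h, hd0]

lemma derivPoly_zero : derivPoly d (0 : Polynomial K) = 0 := by
  unfold derivPoly; simp

lemma derivPoly2_coeff (hd0 : d 0 = 0) (p : Polynomial (Polynomial K)) (n : ℕ) :
    (derivPoly2 d p).coeff n = derivPoly d (p.coeff n) := by
  unfold derivPoly2
  rw [Polynomial.finset_sum_coeff]
  simp only [Polynomial.coeff_C_mul, Polynomial.coeff_X_pow, mul_ite, mul_one, mul_zero]
  rw [Finset.sum_ite_eq p.support n (fun m => derivPoly d (p.coeff m))]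
  split
  · rfl
  · next h => rw [Polynomial.notMem_support_iff.mp h, derivPoly_zero]

theorem aux_main {K : Type*} [Field K] (d : K → K)
    (hadd : ∀ a b, d (a + b) = d a + d b)
    (hmul : ∀ a b, d (a * b) = a * d b + d a * b)
    (R : Polynomial K) (f : Polynomial (Polynomial K))
    (hf : f = Polynomial.X ^ 2 - Polynomial.C R)
    (L : Type) [Field L]
    [Algebra (Polynomial (Polynomial K) ⧸ Ideal.span {f}) L]
    [IsFractionRing (Polynomial (Polynomial K) ⧸ Ideal.span {f}) L]
    (δ : L → L)
    (hδadd : ∀ x y, δ (x + y) = δ x + δ y)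
    (hδmul : ∀ x y, δ (x * y) = x * δ y + δ x * y)
    (hδext : ∀ p : Polynomial (Polynomial K),
      δ (@algebraMap _ L _ _ ‹_› (Ideal.Quotient.mk (Ideal.span {f}) p)) =
        @algebraMap _ L _ _ ‹_› (Ideal.Quotient.mk (Ideal.span {f}) (derivPoly2 d p))) :
    ∀ z : L, δ z = 0 ↔
      ∃ a b : Polynomial (Polynomial K),
        (∀ i j, d ((a.coeff i).coeff j) = 0) ∧ (∀ i j, d ((b.coeff i).coeff j) = 0) ∧
        @algebraMap _ L _ _ ‹_› (Ideal.Quotient.mk (Ideal.span {f}) b) ≠ 0 ∧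
        z * @algebraMap _ L _ _ ‹_› (Ideal.Quotient.mk (Ideal.span {f}) b) =
          @algebraMap _ L _ _ ‹_› (Ideal.Quotient.mk (Ideal.span {f}) a) := by
  intro z
  have hd0 : d 0 = 0 := by have := hadd 0 0; simpa using this
  have hd1 : d 1 = 0 := by have := hmul 1 1; simpa using this
  set φ : Polynomial (Polynomial K) →+* L :=
    (@algebraMap _ L _ _ ‹_›).comp
      (Ideal.Quotient.mk (Ideal.span {f})) with hφdef
  have hφ : ∀ p, algebraMap (Polynomial (Polynomial K) ⧸ Ideal.span {f}) L
      (Ideal.Quotient.mk (Ideal.span {f}) p) = φ p := fun _ => rfl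
  have hδφ : ∀ p, δ (φ p) = φ (derivPoly2 d p) := fun p => hδext p
  have hfm : f.Monic := by
    rw [hf]; exact Polynomial.monic_X_pow_sub_C R (by norm_num)
  have hfd : f.degree = 2 := by
    rw [hf]; exact Polynomial.degree_X_pow_sub_C (by norm_num) R
  have hinj : Function.Injective
      (algebraMap (Polynomial (Polynomial K) ⧸ Ideal.span {f}) L) :=
    IsFractionRing.injective _ _
  have hker : ∀ p, φ p = 0 ↔ f ∣ p := by
    intro p
    rw [hφdef]
    simp only [RingHom.comp_apply]
    rw [show (0 : L) = algebraMap (Polynomial (Polynomial K) ⧸ Ideal.span {f}) L 0 from (map_zero (@algebraMap _ L _ _ ‹_›)).symm]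
    rw [hinj.eq_iff, Ideal.Quotient.eq_zero_iff_mem, Ideal.mem_span_singleton]
  have hCB : ∀ B : Polynomial K, B ≠ 0 → φ (Polynomial.C B) ≠ 0 := by
    intro B hB h
    rw [hker] at h
    have h2 := Polynomial.degree_le_of_dvd h (by simpa using hB)
    rw [hfd] at h2
    exact absurd (le_trans h2 Polynomial.degree_C_le) (by norm_num)
  have hderivC : ∀ B : Polynomial K,
      derivPoly2 d (Polynomial.C B) = Polynomial.C (derivPoly d B) := by
    intro B
    ext n
    rw [derivPoly2_coeff d hd0]
    simp only [Polynomial.coeff_C]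
    split
    · rfl
    · rw [derivPoly_zero]
  constructor
  · intro hz
    classical
    -- normalization to a monic denominator
    have hnorm : ∀ (A : Polynomial (Polynomial K)) (B : Polynomial K), B ≠ 0 →
        A.degree < 2 → z * φ (Polynomial.C B) = φ A →
        ∃ A2 : Polynomial (Polynomial K), ∃ B2 : Polynomial K,
          B2.Monic ∧ B2.natDegree = B.natDegree ∧ A2.degree < 2 ∧
          z * φ (Polynomial.C B2) = φ A2 := by
      intro A B hB hA heq
      have hu : B.leadingCoeff⁻¹ ≠ 0 := inv_ne_zero (Polynomial.leadingCoeff_ne_zero.mpr hB)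
      refine ⟨A * Polynomial.C (Polynomial.C B.leadingCoeff⁻¹),
        B * Polynomial.C B.leadingCoeff⁻¹,
        Polynomial.monic_mul_leadingCoeff_inv hB, ?_, ?_, ?_⟩
      · rw [Polynomial.natDegree_mul hB (Polynomial.C_ne_zero.mpr hu),
          Polynomial.natDegree_C, add_zero]
      · refine lt_of_le_of_lt (le_trans (Polynomial.degree_mul_le _ _) ?_) hA
        calc A.degree + (Polynomial.C (Polynomial.C B.leadingCoeff⁻¹) :
              Polynomial (Polynomial K)).degree
            ≤ A.degree + 0 := add_le_add_right Polynomial.degree_C_le _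
          _ = A.degree := add_zero _
      · rw [show (Polynomial.C (B * Polynomial.C B.leadingCoeff⁻¹) :
              Polynomial (Polynomial K)) =
            Polynomial.C B * Polynomial.C (Polynomial.C B.leadingCoeff⁻¹) from map_mul _ _ _,
          map_mul, ← mul_assoc, heq, ← map_mul]
    -- reduce mod f preserves φ
    have hmod : ∀ p : Polynomial (Polynomial K), φ (p %ₘ f) = φ p := by
      intro p
      have hdvd : f ∣ (p - p %ₘ f) := by
        rw [Polynomial.modByMonic_eq_sub_mul_div p f, sub_sub_cancel]
        exact Dvd.intro _ rfl
      have h0 : φ (p - p %ₘ f) = 0 := (hker _).mpr hdvd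
      rw [map_sub, sub_eq_zero] at h0
      exact h0.symm
    have hle1 : ∀ x : WithBot ℕ, x < 2 → x ≤ 1 := by
      intro x hx
      cases x with
      | bot => exact bot_le
      | coe n =>
        have h2 : (n : WithBot ℕ) < ((2 : ℕ) : WithBot ℕ) := hx
        have h3 : n ≤ 1 := Nat.lt_succ_iff.mp (WithBot.coe_lt_coe.mp h2)
        exact (WithBot.coe_le_coe.mpr h3 : (n : WithBot ℕ) ≤ ((1 : ℕ) : WithBot ℕ))
    -- an initial representation with denominator in K[λ]
    obtain ⟨⟨p, q⟩, hpq⟩ := @IsLocalization.surj _ _ _ _ _ _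
      ‹IsFractionRing (Polynomial (Polynomial K) ⧸ Ideal.span {f}) L› z
    obtain ⟨Q0, hQ0⟩ := Ideal.Quotient.mk_surjective
      (q : Polynomial (Polynomial K) ⧸ Ideal.span {f})
    obtain ⟨P0, hP0⟩ := Ideal.Quotient.mk_surjective p
    have hfq : φ Q0 = algebraMap (Polynomial (Polynomial K) ⧸ Ideal.span {f}) L q :=
      congrArg _ hQ0
    have hQ0ne : φ Q0 ≠ 0 := by
      rw [hfq]; exact (IsLocalization.map_units L q).ne_zero
    have hzPQ : z * φ Q0 = φ P0 := by
      rw [hfq, show φ P0 = algebraMap (Polynomial (Polynomial K) ⧸ Ideal.span {f}) L p from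
        congrArg _ hP0]
      exact hpq
    have hQ1 : φ (Q0 %ₘ f) = φ Q0 := hmod Q0
    have hdegQ1 : (Q0 %ₘ f).degree < 2 := by
      rw [← hfd]; exact Polynomial.degree_modByMonic_lt Q0 hfm
    set q0 : Polynomial K := (Q0 %ₘ f).coeff 0 with hq0def
    set q1 : Polynomial K := (Q0 %ₘ f).coeff 1 with hq1def
    have hQ1eq : Q0 %ₘ f = Polynomial.C q1 * Polynomial.X + Polynomial.C q0 :=
      Polynomial.eq_X_add_C_of_degree_le_one (hle1 _ hdegQ1)
    set B0 : Polynomial K := q0 ^ 2 - q1 ^ 2 * R with hB0def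
    have hqc : (Q0 %ₘ f) * (Polynomial.C q0 - Polynomial.C q1 * Polynomial.X) =
        Polynomial.C B0 - Polynomial.C (q1 ^ 2) * f := by
      rw [hQ1eq, hf, hB0def]
      simp only [map_sub, map_mul, map_pow]
      ring
    have hφf : φ f = 0 := (hker f).mpr dvd_rfl
    have hφqc : φ (Q0 %ₘ f) * φ (Polynomial.C q0 - Polynomial.C q1 * Polynomial.X) =
        φ (Polynomial.C B0) := by
      rw [← map_mul, hqc, map_sub, map_mul, hφf, mul_zero, sub_zero]
    have hconjne : φ (Polynomial.C q0 - Polynomial.C q1 * Polynomial.X) ≠ 0 := by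
      intro h
      by_cases hc : (Polynomial.C q0 - Polynomial.C q1 * Polynomial.X :
          Polynomial (Polynomial K)) = 0
      · have h0 : q0 = 0 := by
          have := congrArg (fun p => Polynomial.coeff p 0) hc; simpa using this
        have h1 : q1 = 0 := by
          have := congrArg (fun p => Polynomial.coeff p 1) hc; simpa using this
        apply hQ0ne
        rw [← hQ1, hQ1eq, h0, h1]
        simp
      · rw [hker] at h
        have h2 := Polynomial.degree_le_of_dvd h hc
        rw [hfd] at h2
        have h3 : (Polynomial.C q0 - Polynomial.C q1 * Polynomial.X :
            Polynomial (Polynomial K)).degree ≤ 1 := by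
          refine le_trans (Polynomial.degree_sub_le _ _) ?_
          simp only [max_le_iff]
          refine ⟨le_trans Polynomial.degree_C_le (by norm_num), ?_⟩
          refine le_trans (Polynomial.degree_mul_le _ _) ?_
          calc (Polynomial.C q1 : Polynomial (Polynomial K)).degree +
                (Polynomial.X : Polynomial (Polynomial K)).degree
              ≤ 0 + 1 := add_le_add Polynomial.degree_C_le Polynomial.degree_X_le
            _ = 1 := by norm_num
        exact absurd (le_trans h2 h3) (by norm_num)
    have hB0ne : B0 ≠ 0 := by
      intro h
      refine mul_ne_zero (hQ1 ▸ hQ0ne) hconjne ?_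
      rw [hφqc, h]
      simp
    have heq0 : z * φ (Polynomial.C B0) = φ ((P0 * (Polynomial.C q0 -
        Polynomial.C q1 * Polynomial.X)) %ₘ f) := by
      rw [hmod, map_mul, ← hφqc, ← mul_assoc, hQ1, hzPQ]
    have hdegA1 : ((P0 * (Polynomial.C q0 - Polynomial.C q1 * Polynomial.X)) %ₘ f).degree
        < 2 := by
      rw [← hfd]; exact Polynomial.degree_modByMonic_lt _ hfm
    -- minimization over monic denominators
    have hex : ∃ n : ℕ, ∃ A : Polynomial (Polynomial K), ∃ B : Polynomial K,
        B.Monic ∧ B.natDegree = n ∧ A.degree < 2 ∧ z * φ (Polynomial.C B) = φ A := by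
      obtain ⟨A2, B2, h1, h2, h3, h4⟩ := hnorm _ B0 hB0ne hdegA1 heq0
      exact ⟨B0.natDegree, A2, B2, h1, h2, h3, h4⟩
    obtain ⟨A, B, hBm, hBn, hAdeg, heq⟩ := Nat.find_spec hex
    have hBne : B ≠ 0 := hBm.ne_zero
    -- differentiate the relation
    have hre : z * φ (Polynomial.C (derivPoly d B)) = φ (derivPoly2 d A) := by
      have h4 : δ (φ A) = z * δ (φ (Polynomial.C B)) + δ z * φ (Polynomial.C B) :=
        heq ▸ hδmul z (φ (Polynomial.C B))
      rw [hz, zero_mul, add_zero, hδφ, hδφ, hderivC] at h4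
      exact h4.symm
    set A' : Polynomial (Polynomial K) := derivPoly2 d A with hA'def
    set B' : Polynomial K := derivPoly d B with hB'def
    have hA'coeff : ∀ m, A'.coeff m = derivPoly d (A.coeff m) := derivPoly2_coeff d hd0 A
    have hA'deg0 : ∀ m : ℕ, 2 ≤ m → A'.coeff m = 0 := by
      intro m hm
      rw [hA'coeff,
        Polynomial.coeff_eq_zero_of_degree_lt (lt_of_lt_of_le hAdeg (by exact_mod_cast hm)),
        derivPoly_zero]
    have hG : A * Polynomial.C B' = A' * Polynomial.C B := by
      have h5 : φ (A * Polynomial.C B' - A' * Polynomial.C B) = 0 := by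
        rw [map_sub, map_mul, map_mul, ← heq, ← hre]; ring
      rw [hker] at h5
      by_cases hG0 : A * Polynomial.C B' - A' * Polynomial.C B = 0
      · exact sub_eq_zero.mp hG0
      · exfalso
        have h6 := Polynomial.degree_le_of_dvd h5 hG0
        rw [hfd] at h6
        have h7 : (A * Polynomial.C B' - A' * Polynomial.C B).degree
            < ((2 : ℕ) : WithBot ℕ) := by
          rw [Polynomial.degree_lt_iff_coeff_zero]
          intro m hm
          have hm' : 2 ≤ m := hm
          rw [Polynomial.coeff_sub, Polynomial.coeff_mul_C, Polynomial.coeff_mul_C,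
            Polynomial.coeff_eq_zero_of_degree_lt
              (lt_of_lt_of_le hAdeg (by exact_mod_cast hm')),
            hA'deg0 m hm']
          ring
        exact absurd h6 (not_le.mpr (by exact_mod_cast h7))
    have hB'c : ∀ m, B'.coeff m = d (B.coeff m) := derivPoly_coeff d hd0 B
    have hB'0 : B' = 0 := by
      by_contra hB'ne
      have hlt : B'.natDegree < B.natDegree := by
        by_contra hge
        push_neg at hge
        have h8 : B'.coeff B'.natDegree = 0 := by
          rcases lt_or_eq_of_le hge with h | h
          · rw [hB'c, Polynomial.coeff_eq_zero_of_natDegree_lt h, hd0]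
          · rw [hB'c, ← h, hBm.coeff_natDegree, hd1]
        exact hB'ne (Polynomial.leadingCoeff_eq_zero.mp h8)
      have hA'd : A'.degree < 2 := by
        have : A'.degree < ((2 : ℕ) : WithBot ℕ) := by
          rw [Polynomial.degree_lt_iff_coeff_zero]
          intro m hm
          exact hA'deg0 m hm
        exact_mod_cast this
      obtain ⟨A2, B2, h1, h2, h3, h4⟩ := hnorm A' B' hB'ne hA'd hre
      exact Nat.find_min hex (hBn ▸ hlt) ⟨A2, B2, h1, h2, h3, h4⟩
    have hA'0 : A' = 0 := by
      have h9 : A' * Polynomial.C B = 0 := by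
        rw [← hG, hB'0, map_zero, mul_zero]
      rcases mul_eq_zero.mp h9 with h | h
      · exact h
      · exact absurd h (by simp [hBne])
    refine ⟨A, Polynomial.C B, ?_, ?_, ?_, heq⟩
    · intro i j
      rw [← derivPoly_coeff d hd0, ← derivPoly2_coeff d hd0, ← hA'def, hA'0]
      simp
    · intro i j
      by_cases hi : i = 0
      · subst hi
        rw [show ((Polynomial.C B : Polynomial (Polynomial K)).coeff 0) = B from
          Polynomial.coeff_C_zero]
        rw [← derivPoly_coeff d hd0, ← hB'def, hB'0]
        simp
      · rw [Polynomial.coeff_C, if_neg hi]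
        simpa using hd0
    · exact hCB B hBne
  · rintro ⟨a, b, ha, hb, hbne, heq⟩
    have key : ∀ c : Polynomial (Polynomial K), (∀ i j, d ((c.coeff i).coeff j) = 0) →
        derivPoly2 d c = 0 := by
      intro c hc
      ext i j
      rw [derivPoly2_coeff d hd0, derivPoly_coeff d hd0, hc i j]
      simp
    have ha0 := key a ha
    have hb0 := key b hb
    simp only [hφ] at hbne heq
    have h1 : δ (φ a) = 0 := by rw [hδφ, ha0]; simpa using (map_zero φ)
    have h2 : δ (φ b) = 0 := by rw [hδφ, hb0]; simpa using (map_zero φ)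
    have h3 := hδmul z (φ b)
    rw [heq, h1, h2, mul_zero, zero_add] at h3
    exact (mul_eq_zero.mp h3.symm).resolve_right hbne
end aux

/-- let `f = μ² - R(λ)` with `R ∈ C[λ]`, irreducible in `K[λ,μ]`, and
let `K(Γ)` be the fraction field of `K[λ,μ]/(f)` with the derivation `∂̃` induced by
the coefficientwise derivation.  Then the field of constants of `(K(Γ), ∂̃)` is
exactly `C(Γ)`, the fraction field of `C[λ,μ]/(f)`: an element `z` is a constant iff
`z = a/b` for some `a, b ∈ C[λ,μ]` with `b ∉ (f)`. -/
theorem constants_of_spectral_function_field {K : Type*} [Field K] (d : K → K)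
    (hadd : ∀ a b, d (a + b) = d a + d b)
    (hmul : ∀ a b, d (a * b) = a * d b + d a * b)
    (R : Polynomial K) (hR : ∀ n, d (R.coeff n) = 0)
    (hirr : Irreducible ((Polynomial.X : Polynomial (Polynomial K)) ^ 2 - Polynomial.C R))
    (L : Type) [Field L]
    [Algebra (Polynomial (Polynomial K) ⧸
        Ideal.span {(Polynomial.X : Polynomial (Polynomial K)) ^ 2 - Polynomial.C R}) L]
    [IsFractionRing (Polynomial (Polynomial K) ⧸
        Ideal.span {(Polynomial.X : Polynomial (Polynomial K)) ^ 2 - Polynomial.C R}) L]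
    (δ : L → L)
    (hδadd : ∀ x y, δ (x + y) = δ x + δ y)
    (hδmul : ∀ x y, δ (x * y) = x * δ y + δ x * y)
    (hδext : ∀ p : Polynomial (Polynomial K),
      δ (@algebraMap _ L _ _ ‹_› (Ideal.Quotient.mk
            (Ideal.span {(Polynomial.X : Polynomial (Polynomial K)) ^ 2 - Polynomial.C R}) p)) =
        @algebraMap _ L _ _ ‹_› (Ideal.Quotient.mk
            (Ideal.span {(Polynomial.X : Polynomial (Polynomial K)) ^ 2 - Polynomial.C R})
            (derivPoly2 d p))) :
    ∀ z : L, δ z = 0 ↔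
      ∃ a b : Polynomial (Polynomial K),
        (∀ i j, d ((a.coeff i).coeff j) = 0) ∧ (∀ i j, d ((b.coeff i).coeff j) = 0) ∧
        @algebraMap _ L _ _ ‹_› (Ideal.Quotient.mk
            (Ideal.span {(Polynomial.X : Polynomial (Polynomial K)) ^ 2 - Polynomial.C R}) b) ≠ 0 ∧
        z * @algebraMap _ L _ _ ‹_› (Ideal.Quotient.mk
            (Ideal.span {(Polynomial.X : Polynomial (Polynomial K)) ^ 2 - Polynomial.C R}) b) =
          @algebraMap _ L _ _ ‹_› (Ideal.Quotient.mk
            (Ideal.span {(Polynomial.X : Polynomial (Polynomial K)) ^ 2 - Polynomial.C R}) a) :=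
  aux_main d hadd hmul R _ rfl L δ hδadd hδmul hδext
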